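/- Let (H, ·, 1, Δ, ε, ⊲) be a left Post-Hopf algebra over a field K of characteristic zero, and suppose that either Δ is cocommutative or H is connected as a coalgebra. Then (H, ·ᵒᵖ, 1, Δᶜᵒᵖ, ε, ⊲ᵒᵖ) is a right Post-Hopf algebra, where x ·ᵒᵖ y = y·x, Δᶜᵒᵖ = τ ∘ Δ (τ the flip of the tensor factors) and x ⊲ᵒᵖ y = y ⊲ x. -/

import Mathlib

open TensorProduct

/-- The raw data of a bialgebra structure on a `K`-vector space `H`: a (bilinear)
multiplication, a unit, a comultiplication and a counit. -/
structure BialgData (K H : Type*) [Field K] [AddCommGroup H] [Module K H] where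
  mul : H →ₗ[K] H →ₗ[K] H
  one : H
  comul : H →ₗ[K] H ⊗[K] H
  counit : H →ₗ[K] K

namespace BialgData

variable {K H : Type*} [Field K] [AddCommGroup H] [Module K H]

/-- `D` is a bialgebra. -/
structure IsBialgebra (D : BialgData K H) : Prop where
  mul_assoc : ∀ x y z : H, D.mul (D.mul x y) z = D.mul x (D.mul y z)
  one_mul : ∀ x : H, D.mul D.one x = x
  mul_one : ∀ x : H, D.mul x D.one = x
  coassoc : ∀ x : H,
    (TensorProduct.assoc K H H H) ((TensorProduct.map D.comul LinearMap.id) (D.comul x))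
      = (TensorProduct.map LinearMap.id D.comul) (D.comul x)
  counit_comul : ∀ x : H,
    (TensorProduct.lid K H) ((TensorProduct.map D.counit LinearMap.id) (D.comul x)) = x
  comul_counit : ∀ x : H,
    (TensorProduct.rid K H) ((TensorProduct.map LinearMap.id D.counit) (D.comul x)) = x
  comul_mul : ∀ x y : H,
    D.comul (D.mul x y) = TensorProduct.map₂ D.mul D.mul (D.comul x) (D.comul y)
  counit_mul : ∀ x y : H, D.counit (D.mul x y) = D.counit x * D.counit y
  comul_one : D.comul D.one = D.one ⊗ₜ[K] D.one
  counit_one : D.counit D.one = 1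

/-- `D` is a Hopf algebra: a bialgebra admitting an antipode. -/
structure IsHopf (D : BialgData K H) : Prop where
  isBialgebra : D.IsBialgebra
  antipode : ∃ S : H →ₗ[K] H,
    (∀ x : H, TensorProduct.lift (D.mul.compl₁₂ S LinearMap.id) (D.comul x)
        = D.counit x • D.one)
    ∧ (∀ x : H, TensorProduct.lift (D.mul.compl₁₂ LinearMap.id S) (D.comul x)
        = D.counit x • D.one)

/-- The opposite-multiplication bialgebra data. -/
def op (D : BialgData K H) : BialgData K H := { D with mul := D.mul.flip }

/-- The coopposite-comultiplication bialgebra data. -/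
noncomputable def cop (D : BialgData K H) : BialgData K H :=
  { D with comul := (TensorProduct.comm K H H).toLinearMap ∘ₗ D.comul }

/-- `(D, r)` is a right Post-Hopf algebra, with `r x y = x ⊳ y`. -/
structure IsRightPostHopf (D : BialgData K H) (r : H →ₗ[K] H →ₗ[K] H) : Prop where
  isHopf : D.IsHopf
  counit_r : ∀ x y : H, D.counit (r x y) = D.counit x * D.counit y
  comul_r : ∀ x y : H,
    D.comul (r x y) = TensorProduct.map₂ r r (D.comul x) (D.comul y)
  mul_r : ∀ x y z : H,
    r (D.mul x y) z = TensorProduct.lift (D.mul.compl₁₂ (r x) (r y)) (D.comul z)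
  r_r : ∀ x y z : H,
    r (r x y) z
      = r x (TensorProduct.lift (D.mul.compl₁₂ (r y) LinearMap.id) (D.comul z))
  conv_inv : ∃ β : H →ₗ[K] H →ₗ[K] H, ∀ x : H,
    TensorProduct.lift ((LinearMap.llcomp K H H H).compl₁₂ r.flip β) (D.comul x)
        = D.counit x • (LinearMap.id : H →ₗ[K] H)
    ∧ TensorProduct.lift ((LinearMap.llcomp K H H H).compl₁₂ β r.flip) (D.comul x)
        = D.counit x • (LinearMap.id : H →ₗ[K] H)

/-- `(D, l)` is a left Post-Hopf algebra, with `l x y = x ⊲ y`. -/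
structure IsLeftPostHopf (D : BialgData K H) (l : H →ₗ[K] H →ₗ[K] H) : Prop where
  isHopf : D.IsHopf
  counit_l : ∀ x y : H, D.counit (l x y) = D.counit x * D.counit y
  comul_l : ∀ x y : H,
    D.comul (l x y) = TensorProduct.map₂ l l (D.comul x) (D.comul y)
  l_mul : ∀ x y z : H,
    l x (D.mul y z)
      = TensorProduct.lift (D.mul.compl₁₂ (l.flip y) (l.flip z)) (D.comul x)
  l_l : ∀ x y z : H,
    l x (l y z)
      = TensorProduct.lift
          ((D.mul.compl₁₂ LinearMap.id (l.flip y)).compr₂ (l.flip z)) (D.comul x)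
  conv_inv : ∃ β : H →ₗ[K] H →ₗ[K] H, ∀ x : H,
    TensorProduct.lift ((LinearMap.llcomp K H H H).compl₁₂ l β) (D.comul x)
        = D.counit x • (LinearMap.id : H →ₗ[K] H)
    ∧ TensorProduct.lift ((LinearMap.llcomp K H H H).compl₁₂ β l) (D.comul x)
        = D.counit x • (LinearMap.id : H →ₗ[K] H)

/-- `D` is cocommutative. -/
def IsCocomm (D : BialgData K H) : Prop :=
  ∀ x : H, TensorProduct.comm K H H (D.comul x) = D.comul x

end BialgData

universe u v

/-- A bundled `K`-module, used to form iterated tensor powers. -/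
structure ModPack (K : Type u) [CommSemiring K] : Type (max u (v + 1)) where
  carrier : Type v
  [acg : AddCommGroup carrier]
  [mod : Module K carrier]

attribute [instance] ModPack.acg ModPack.mod

/-- `tpk K H n` is the `(n+1)`-fold tensor power `H ⊗ (H ⊗ (⋯ ⊗ H))`. -/
noncomputable def tpk (K : Type u) [CommSemiring K]
    (H : Type v) [AddCommGroup H] [Module K H] : ℕ → ModPack.{u, v} K
  | 0 => ⟨H⟩
  | n + 1 => ⟨H ⊗[K] (tpk K H n).carrier⟩

namespace BialgData

variable {K : Type u} [Field K] {H : Type v} [AddCommGroup H] [Module K H]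

/-- The reduced coproduct of `D`: the unique linear map with `Δ̃(1) = 0` and
`Δ̃(x) = Δ(x) - 1 ⊗ x - x ⊗ 1` for `x ∈ ker ε`. -/
noncomputable def redComul (D : BialgData K H) : H →ₗ[K] H ⊗[K] H :=
  D.comul - TensorProduct.mk K H H D.one - (TensorProduct.mk K H H).flip D.one
    + D.counit.smulRight (D.one ⊗ₜ[K] D.one)

/-- Applying `Δ̃` to the first tensor factor: `Δ̃ ⊗ id^{⊗ n}`. -/
noncomputable def frontMap (D : BialgData K H) :
    (n : ℕ) → (tpk K H n).carrier →ₗ[K] (tpk K H (n + 1)).carrier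
  | 0 => D.redComul
  | n + 1 =>
      (TensorProduct.assoc K H H (tpk K H n).carrier).toLinearMap
        ∘ₗ TensorProduct.map D.redComul LinearMap.id

/-- The iterated reduced coproducts: `Δ̃⁽⁰⁾ = ρ` (with `ρ(x) = x - ε(x)1`), `Δ̃⁽¹⁾ = Δ̃`,
and `Δ̃⁽ᵏ⁺¹⁾ = (Δ̃ ⊗ id^{⊗ k}) ∘ Δ̃⁽ᵏ⁾`. -/
noncomputable def redIter (D : BialgData K H) :
    (n : ℕ) → H →ₗ[K] (tpk K H n).carrier
  | 0 => LinearMap.id - D.counit.smulRight D.one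
  | 1 => D.redComul
  | n + 2 => D.frontMap (n + 1) ∘ₗ D.redIter (n + 1)

/-- `D` is connected as a coalgebra: every element is killed by some iterated
reduced coproduct. -/
def IsConnected (D : BialgData K H) : Prop := ∀ x : H, ∃ n : ℕ, D.redIter n x = 0

end BialgData


namespace S5

variable {K : Type u} [Field K] {H : Type v} [AddCommGroup H] [Module K H]
variable {A : Type w} [Ring A] [Algebra K A]

/-- assoc naturality -/
theorem assoc_nat {M N P M' N' P' : Type*} [AddCommGroup M] [Module K M]
    [AddCommGroup N] [Module K N] [AddCommGroup P] [Module K P]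
    [AddCommGroup M'] [Module K M'] [AddCommGroup N'] [Module K N']
    [AddCommGroup P'] [Module K P']
    (f : M →ₗ[K] M') (g : N →ₗ[K] N') (h : P →ₗ[K] P') :
    (TensorProduct.assoc K M' N' P').toLinearMap ∘ₗ map (map f g) h
      = map f (map g h) ∘ₗ (TensorProduct.assoc K M N P).toLinearMap := by
  apply TensorProduct.ext_threefold
  intro x y z
  simp

noncomputable def conv (D : BialgData K H) (f g : H →ₗ[K] A) : H →ₗ[K] A :=
  LinearMap.mul' K A ∘ₗ map f g ∘ₗ D.comul

noncomputable def eta (D : BialgData K H) : H →ₗ[K] A := D.counit.smulRight (1 : A)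

theorem eta_apply (D : BialgData K H) (x : H) : (eta D : H →ₗ[K] A) x = D.counit x • 1 := rfl

theorem conv_apply (D : BialgData K H) (f g : H →ₗ[K] A) (x : H) :
    conv D f g x = LinearMap.mul' K A (map f g (D.comul x)) := rfl

variable {D : BialgData K H}

theorem conv_eta_right (hB : D.IsBialgebra) (f : H →ₗ[K] A) : conv D f (eta D) = f := by
  have key : LinearMap.mul' K A ∘ₗ map f (eta D)
      = f ∘ₗ (TensorProduct.rid K H).toLinearMap ∘ₗ map LinearMap.id D.counit := by
    apply TensorProduct.ext'
    intro a b
    simp [eta, Algebra.mul_smul_comm]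
  ext x
  have := congrArg (fun (F : H ⊗[K] H →ₗ[K] A) => F (D.comul x)) key
  simp only [LinearMap.coe_comp, Function.comp_apply, LinearEquiv.coe_coe] at this
  rw [conv_apply, this, hB.comul_counit]

theorem conv_eta_left (hB : D.IsBialgebra) (f : H →ₗ[K] A) : conv D (eta D) f = f := by
  have key : LinearMap.mul' K A ∘ₗ map (eta D) f
      = f ∘ₗ (TensorProduct.lid K H).toLinearMap ∘ₗ map D.counit LinearMap.id := by
    apply TensorProduct.ext'
    intro a b
    simp [eta, Algebra.smul_mul_assoc]
  ext x
  have := congrArg (fun (F : H ⊗[K] H →ₗ[K] A) => F (D.comul x)) key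
  simp only [LinearMap.coe_comp, Function.comp_apply, LinearEquiv.coe_coe] at this
  rw [conv_apply, this, hB.counit_comul]

theorem conv_assoc (hB : D.IsBialgebra) (f g h : H →ₗ[K] A) :
    conv D (conv D f g) h = conv D f (conv D g h) := by
  ext x
  have c1 : LinearMap.mul' K A ∘ₗ map (conv D f g) h
      = (LinearMap.mul' K A ∘ₗ map (LinearMap.mul' K A ∘ₗ map f g) h) ∘ₗ map D.comul LinearMap.id := by
    apply TensorProduct.ext'; intro a b; simp [conv_apply]
  have c2 : LinearMap.mul' K A ∘ₗ map f (conv D g h)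
      = (LinearMap.mul' K A ∘ₗ map f (LinearMap.mul' K A ∘ₗ map g h)) ∘ₗ map LinearMap.id D.comul := by
    apply TensorProduct.ext'; intro a b; simp [conv_apply]
  have c3 : LinearMap.mul' K A ∘ₗ map (LinearMap.mul' K A ∘ₗ map f g) h
      = (LinearMap.mul' K A ∘ₗ map f (LinearMap.mul' K A ∘ₗ map g h))
          ∘ₗ (TensorProduct.assoc K H H H).toLinearMap := by
    apply TensorProduct.ext_threefold
    intro a b c
    simp [mul_assoc]
  calc conv D (conv D f g) h x
      = (LinearMap.mul' K A ∘ₗ map (conv D f g) h) (D.comul x) := rfl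
    _ = (LinearMap.mul' K A ∘ₗ map (LinearMap.mul' K A ∘ₗ map f g) h)
          ((map D.comul LinearMap.id) (D.comul x)) := by rw [c1]; rfl
    _ = (LinearMap.mul' K A ∘ₗ map f (LinearMap.mul' K A ∘ₗ map g h))
          ((TensorProduct.assoc K H H H) ((map D.comul LinearMap.id) (D.comul x))) := by
        rw [c3]; rfl
    _ = (LinearMap.mul' K A ∘ₗ map f (LinearMap.mul' K A ∘ₗ map g h))
          ((map LinearMap.id D.comul) (D.comul x)) := by rw [hB.coassoc]
    _ = conv D f (conv D g h) x := by
        exact (congrArg (fun (F : H ⊗[K] H →ₗ[K] A) => F (D.comul x)) c2).symm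

theorem conv_add_right (f g g' : H →ₗ[K] A) :
    conv D f (g + g') = conv D f g + conv D f g' := by
  ext x
  have : map f (g + g') = map f g + map f g' := by
    apply TensorProduct.ext'; intro a b; simp [tmul_add]
  simp [conv_apply, this]

theorem conv_sub_left (f f' g : H →ₗ[K] A) :
    conv D (f - f') g = conv D f g - conv D f' g := by
  ext x
  have : map (f - f') g = map f g - map f' g := by
    apply TensorProduct.ext'; intro a b; simp [sub_tmul]
  simp [conv_apply, this]

end S5

namespace S5

variable {K : Type u} [Field K] {H : Type v} [AddCommGroup H] [Module K H]
variable {D : BialgData K H}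

noncomputable def rho (D : BialgData K H) : H →ₗ[K] H :=
  LinearMap.id - D.counit.smulRight D.one

theorem rho_apply (x : H) : rho D x = x - D.counit x • D.one := rfl

theorem redIter_zero : D.redIter 0 = rho D := rfl

theorem rho_one (hB : D.IsBialgebra) : rho D D.one = 0 := by
  simp [rho_apply, hB.counit_one]

theorem comp_rho {M : Type*} [AddCommGroup M] [Module K M]
    (u : H →ₗ[K] M) (hu : u D.one = 0) : u ∘ₗ rho D = u := by
  ext x
  simp [rho_apply, hu]

theorem map_eta_left (hB : D.IsBialgebra) {M : Type*} [AddCommGroup M] [Module K M]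
    (Y : H →ₗ[K] M) (x : H) :
    map (D.counit.smulRight D.one) Y (D.comul x) = D.one ⊗ₜ[K] Y x := by
  have e : map (D.counit.smulRight D.one) Y
      = mk K H M D.one ∘ₗ Y ∘ₗ (TensorProduct.lid K H).toLinearMap
          ∘ₗ map D.counit LinearMap.id := by
    apply TensorProduct.ext'
    intro a b
    simp [smul_tmul]
  rw [e]
  simp only [LinearMap.coe_comp, Function.comp_apply, LinearEquiv.coe_coe]
  rw [hB.counit_comul]
  rfl

theorem map_eta_right (hB : D.IsBialgebra) {M : Type*} [AddCommGroup M] [Module K M]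
    (Y : H →ₗ[K] M) (x : H) :
    map Y (D.counit.smulRight D.one) (D.comul x) = (Y x) ⊗ₜ[K] D.one := by
  have e : map Y (D.counit.smulRight D.one)
      = (mk K M H).flip D.one ∘ₗ Y ∘ₗ (TensorProduct.rid K H).toLinearMap
          ∘ₗ map LinearMap.id D.counit := by
    apply TensorProduct.ext'
    intro a b
    simp [tmul_smul, smul_tmul]
  rw [e]
  simp only [LinearMap.coe_comp, Function.comp_apply, LinearEquiv.coe_coe]
  rw [hB.comul_counit]
  rfl

theorem redComul_eq (hB : D.IsBialgebra) :
    D.redComul = map (rho D) (rho D) ∘ₗ D.comul := by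
  ext x
  have expand : map (rho D) (rho D)
      = map LinearMap.id LinearMap.id
        - map (D.counit.smulRight D.one) LinearMap.id
        - map LinearMap.id (D.counit.smulRight D.one)
        + map (D.counit.smulRight D.one) (D.counit.smulRight D.one) := by
    apply TensorProduct.ext'
    intro a b
    simp only [rho, LinearMap.add_apply, LinearMap.sub_apply, map_tmul,
      LinearMap.id_coe, id_eq]
    rw [sub_tmul, tmul_sub, tmul_sub]
    abel
  have h4 : map (D.counit.smulRight D.one) (D.counit.smulRight D.one) (D.comul x)
      = D.counit x • (D.one ⊗ₜ[K] D.one) := by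
    have : map (D.counit.smulRight D.one) (D.counit.smulRight D.one)
        = map (D.counit.smulRight D.one) LinearMap.id
            ∘ₗ map LinearMap.id (D.counit.smulRight D.one) := by
      rw [← TensorProduct.map_comp]; simp
    rw [this]
    simp only [LinearMap.coe_comp, Function.comp_apply]
    rw [map_eta_right hB LinearMap.id x]
    simp [smul_tmul]
  simp only [LinearMap.coe_comp, Function.comp_apply, expand, LinearMap.add_apply,
    LinearMap.sub_apply]
  rw [map_eta_left hB LinearMap.id x, map_eta_right hB LinearMap.id x, h4]
  simp only [LinearMap.id_coe, id_eq]
  rw [TensorProduct.map_id]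
  simp only [LinearMap.id_coe, id_eq]
  rfl

theorem redComul_one (hB : D.IsBialgebra) : D.redComul D.one = 0 := by
  rw [redComul_eq hB]
  simp [hB.comul_one, rho_one hB]

theorem redComul_rho (hB : D.IsBialgebra) : D.redComul ∘ₗ rho D = D.redComul :=
  comp_rho D.redComul (redComul_one hB)

theorem redIter_succ (hB : D.IsBialgebra) (n : ℕ) :
    D.redIter (n + 1) = D.frontMap n ∘ₗ D.redIter n := by
  cases n with
  | zero => exact (redComul_rho hB).symm
  | succ m => rfl

theorem redIter_succ_eq (hB : D.IsBialgebra) (n : ℕ) :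
    D.redIter (n + 1) = map (rho D) (D.redIter n) ∘ₗ D.comul := by
  induction n with
  | zero => exact redComul_eq hB
  | succ n ih =>
    set T := D.redIter n with hT
    have A1 : map D.redComul LinearMap.id ∘ₗ map (rho D) T = map D.redComul T := by
      rw [← TensorProduct.map_comp, redComul_rho hB, LinearMap.id_comp]
    have A2 : map D.redComul T
        = map (map (rho D) (rho D)) T ∘ₗ map D.comul LinearMap.id := by
      rw [← TensorProduct.map_comp, redComul_eq hB, LinearMap.comp_id]
    have A3 := assoc_nat (K := K) (rho D) (rho D) T
    have A4 : map (rho D) (map (rho D) T) ∘ₗ map LinearMap.id D.comul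
        = map (rho D) (map (rho D) T ∘ₗ D.comul) := by
      rw [← TensorProduct.map_comp, LinearMap.comp_id]
    ext x
    calc @id (H ⊗[K] (H ⊗[K] (tpk K H n).carrier)) (D.redIter (n + 2) x)
        = (TensorProduct.assoc K H H (tpk K H n).carrier)
            (map D.redComul LinearMap.id (D.redIter (n + 1) x)) := rfl
      _ = (TensorProduct.assoc K H H (tpk K H n).carrier)
            (map D.redComul LinearMap.id (map (rho D) T (D.comul x))) := by
          rw [ih]; rfl
      _ = (TensorProduct.assoc K H H (tpk K H n).carrier)
            (map D.redComul T (D.comul x)) := by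
          exact congrArg _ (LinearMap.congr_fun A1 (D.comul x))
      _ = (TensorProduct.assoc K H H (tpk K H n).carrier)
            ((map (map (rho D) (rho D)) T) (map D.comul LinearMap.id (D.comul x))) := by
          exact congrArg _ (LinearMap.congr_fun A2 (D.comul x))
      _ = map (rho D) (map (rho D) T)
            ((TensorProduct.assoc K H H H) (map D.comul LinearMap.id (D.comul x))) := by
          exact LinearMap.congr_fun A3 (map D.comul LinearMap.id (D.comul x))
      _ = map (rho D) (map (rho D) T) (map LinearMap.id D.comul (D.comul x)) := by
          rw [hB.coassoc x]
      _ = map (rho D) (map (rho D) T ∘ₗ D.comul) (D.comul x) := by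
          exact LinearMap.congr_fun A4 (D.comul x)
      _ = @id (H ⊗[K] (H ⊗[K] (tpk K H n).carrier)) (map (rho D) (D.redIter (n + 1)) (D.comul x)) := by rw [ih]; rfl
      _ = @id (H ⊗[K] (H ⊗[K] (tpk K H n).carrier)) ((map (rho D) (D.redIter (n + 1)) ∘ₗ D.comul) x) := rfl

theorem redIter_one_zero (hB : D.IsBialgebra) (n : ℕ) : D.redIter n D.one = 0 := by
  induction n with
  | zero => exact rho_one hB
  | succ n ih =>
    rw [redIter_succ hB]
    simp only [LinearMap.coe_comp, Function.comp_apply, ih, map_zero]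

theorem redIter_mono (hB : D.IsBialgebra) {n : ℕ} {x : H} (hx : D.redIter n x = 0) :
    ∀ m, n ≤ m → D.redIter m x = 0 := by
  intro m hm
  induction m with
  | zero => exact Nat.le_zero.mp hm ▸ hx
  | succ m ih =>
    rcases Nat.lt_or_ge n (m + 1) with h1 | h2
    · have := ih (by omega)
      rw [redIter_succ hB]
      simp only [LinearMap.coe_comp, Function.comp_apply, this, map_zero]
    · have : n = m + 1 := by omega
      exact this ▸ hx

theorem id_redIter_zero (hB : D.IsBialgebra) {n : ℕ} {x : H}
    (h1 : D.redIter n x = 0) :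
    map LinearMap.id (D.redIter n) (D.comul x) = 0 := by
  have h2 : D.redIter (n + 1) x = 0 := redIter_mono hB h1 (n + 1) (by omega)
  have e := LinearMap.congr_fun (redIter_succ_eq hB n) x
  rw [h2] at e
  have e' : map (rho D) (D.redIter n) (D.comul x) = 0 := by
    exact e.symm
  have split : map (LinearMap.id : H →ₗ[K] H) (D.redIter n)
      = map (rho D) (D.redIter n) + map (D.counit.smulRight D.one) (D.redIter n) := by
    apply TensorProduct.ext'
    intro a b
    simp only [map_tmul, LinearMap.add_apply, rho_apply, LinearMap.id_coe, id_eq]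
    rw [sub_tmul]
    simp [add_tmul]
  rw [split]
  simp only [LinearMap.add_apply]
  rw [e', map_eta_left hB (D.redIter n) x, h1, tmul_zero, add_zero]

variable {A : Type w} [Ring A] [Algebra K A]

theorem conv_sub_right (f g g' : H →ₗ[K] A) :
    conv D f (g - g') = conv D f g - conv D f g' := by
  ext x
  have : map f (g - g') = map f g - map f g' := by
    apply TensorProduct.ext'; intro a b; simp [tmul_sub]
  simp [conv_apply, this]

noncomputable def convPow (D : BialgData K H) (u : H →ₗ[K] A) : ℕ → (H →ₗ[K] A)
  | 0 => eta D
  | n + 1 => conv D u (convPow D u n)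

noncomputable def Gmap (u : H →ₗ[K] A) : (n : ℕ) → (tpk K H n).carrier →ₗ[K] A
  | 0 => u
  | n + 1 => LinearMap.mul' K A ∘ₗ map u (Gmap u n)

theorem convPow_eq (hB : D.IsBialgebra) (u : H →ₗ[K] A) (hu : u D.one = 0) (n : ℕ) :
    convPow D u (n + 1) = Gmap u n ∘ₗ D.redIter n := by
  induction n with
  | zero =>
    show conv D u (eta D) = Gmap u 0 ∘ₗ D.redIter 0
    rw [conv_eta_right hB, redIter_zero]
    exact (comp_rho u hu).symm
  | succ n ih =>
    have m1 : map u (Gmap u n ∘ₗ D.redIter n)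
        = map u (Gmap u n) ∘ₗ map (rho D) (D.redIter n) := by
      rw [← TensorProduct.map_comp, comp_rho u hu]
    ext x
    calc convPow D u (n + 2) x
        = LinearMap.mul' K A (map u (convPow D u (n + 1)) (D.comul x)) := rfl
      _ = LinearMap.mul' K A (map u (Gmap u n ∘ₗ D.redIter n) (D.comul x)) := by
          rw [ih]
      _ = LinearMap.mul' K A
            (map u (Gmap u n) (map (rho D) (D.redIter n) (D.comul x))) := by
          exact congrArg _ (LinearMap.congr_fun m1 (D.comul x))
      _ = LinearMap.mul' K A (map u (Gmap u n) (D.redIter (n + 1) x)) := by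
          rw [redIter_succ_eq hB n]; rfl
      _ = (Gmap u (n + 1) ∘ₗ D.redIter (n + 1)) x := rfl

theorem rinv (hB : D.IsBialgebra) (hc : D.IsConnected)
    (f : H →ₗ[K] A) (hf : f D.one = 1) :
    ∃ G : H →ₗ[K] A, conv D f G = eta D ∧ G D.one = 1 := by
  classical
  set u : H →ₗ[K] A := eta D - f with hu_def
  have hu : u D.one = 0 := by simp [hu_def, eta_apply, hB.counit_one, hf]
  set g : ℕ → (H →ₗ[K] A) := fun M => ∑ n ∈ Finset.range (M + 1), convPow D u n with hg
  have hvan : ∀ (x : H) (m : ℕ), D.redIter m x = 0 → ∀ n, m < n → convPow D u n x = 0 := by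
    intro x m hm n hn
    obtain ⟨k, rfl⟩ : ∃ k, n = k + 1 := ⟨n - 1, by omega⟩
    rw [convPow_eq hB u hu k]
    simp only [LinearMap.coe_comp, Function.comp_apply]
    rw [redIter_mono hB hm k (by omega), map_zero]
  have hgsucc : ∀ M, g (M + 1) = g M + convPow D u (M + 1) := by
    intro M; rw [hg]; exact Finset.sum_range_succ _ _
  have hstab : ∀ (x : H) (m M : ℕ), D.redIter m x = 0 → m ≤ M → g M x = g m x := by
    intro x m M hm hM
    induction M with
    | zero =>
      have : m = 0 := by omega
      subst this; rfl
    | succ M ih =>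
      rcases Nat.lt_or_ge m (M + 1) with h1 | h2
      · have e1 := ih (by omega)
        rw [hgsucc M]
        simp only [LinearMap.add_apply]
        rw [hvan x m hm (M + 1) (by omega), add_zero, e1]
      · have : m = M + 1 := by omega
        subst this; rfl
  set N : H → ℕ := fun x => Classical.choose (hc x) with hN
  have hNspec : ∀ x : H, D.redIter (N x) x = 0 := fun x => Classical.choose_spec (hc x)
  set Gfun : H → A := fun x => g (N x) x with hGfun
  have keyG : ∀ (x : H) (M : ℕ), D.redIter M x = 0 → Gfun x = g M x := by
    intro x M hM
    have h1 := hstab x (N x) (max (N x) M) (hNspec x) (le_max_left _ _)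
    have h2 := hstab x M (max (N x) M) hM (le_max_right _ _)
    exact (h1.symm.trans h2)
  have Gadd : ∀ x y, Gfun (x + y) = Gfun x + Gfun y := by
    intro x y
    set M := max (N (x + y)) (max (N x) (N y)) with hM
    have e0 : Gfun (x + y) = g M (x + y) :=
      keyG (x + y) M (redIter_mono hB (hNspec (x + y)) M (le_max_left _ _))
    have e1 : Gfun x = g M x :=
      keyG x M (redIter_mono hB (hNspec x) M
        (le_trans (le_max_left _ _) (le_max_right _ _)))
    have e2 : Gfun y = g M y :=
      keyG y M (redIter_mono hB (hNspec y) M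
        (le_trans (le_max_right _ _) (le_max_right _ _)))
    rw [e0, e1, e2, map_add]
  have Gsmul : ∀ (c : K) (x : H), Gfun (c • x) = c • Gfun x := by
    intro c x
    set M := max (N (c • x)) (N x) with hM
    have e0 : Gfun (c • x) = g M (c • x) :=
      keyG (c • x) M (redIter_mono hB (hNspec (c • x)) M (le_max_left _ _))
    have e1 : Gfun x = g M x :=
      keyG x M (redIter_mono hB (hNspec x) M (le_max_right _ _))
    rw [e0, e1, map_smul]
  set G : H →ₗ[K] A :=
    { toFun := Gfun, map_add' := Gadd, map_smul' := Gsmul } with hGdef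
  have G_eq : ∀ (x : H) (M : ℕ), D.redIter M x = 0 → G x = g M x := keyG
  have hGone : G D.one = 1 := by
    have e := G_eq D.one 0 (rho_one hB)
    rw [e, hg]
    simp [Finset.sum_range_one, convPow, eta_apply, hB.counit_one]
  have conv_u_g : ∀ M, conv D u (g M) = g (M + 1) - eta D := by
    intro M
    induction M with
    | zero =>
      have e0 : g 0 = eta D := by
        rw [hg]; simp [Finset.sum_range_one]; rfl
      rw [e0, conv_eta_right hB, hgsucc 0, e0]
      have : convPow D u 1 = conv D u (eta D) := rfl
      rw [this, conv_eta_right hB]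
      abel
    | succ M ih =>
      rw [hgsucc M, conv_add_right, ih]
      have : conv D u (convPow D u (M + 1)) = convPow D u (M + 2) := rfl
      rw [this, hgsucc (M + 1), hgsucc M]
      abel
  have conv_f_g : ∀ M, conv D f (g M) = eta D - convPow D u (M + 1) := by
    intro M
    have hf' : f = eta D - u := by rw [hu_def]; abel
    rw [hf', conv_sub_left, conv_eta_left hB, conv_u_g M, hgsucc M]
    abel
  refine ⟨G, ?_, hGone⟩
  ext x
  set M := N x with hMdef
  have hM : D.redIter M x = 0 := hNspec x
  -- factor G - g M through redIter M
  have hker : LinearMap.ker (D.redIter M) ≤ LinearMap.ker (G - g M) := by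
    intro y hy
    rw [LinearMap.mem_ker] at hy ⊢
    simp only [LinearMap.sub_apply]
    rw [G_eq y M hy, sub_self]
  obtain ⟨ext1, hext1⟩ :=
    LinearMap.exists_extend
      (((LinearMap.ker (D.redIter M)).liftQ (G - g M) hker)
        ∘ₗ (D.redIter M).quotKerEquivRange.symm.toLinearMap)
  have hfac : ∀ y : H, ext1 (D.redIter M y) = (G - g M) y := by
    intro y
    have h1 : (D.redIter M) y ∈ LinearMap.range (D.redIter M) :=
      LinearMap.mem_range_self _ y
    have h2 : ext1 ((LinearMap.range (D.redIter M)).subtype ⟨D.redIter M y, h1⟩)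
        = (((LinearMap.ker (D.redIter M)).liftQ (G - g M) hker)
            ∘ₗ (D.redIter M).quotKerEquivRange.symm.toLinearMap) ⟨D.redIter M y, h1⟩ :=
      LinearMap.congr_fun hext1 _
    simp only [Submodule.coe_subtype, LinearMap.coe_comp, Function.comp_apply,
      LinearEquiv.coe_coe] at h2
    rw [LinearMap.quotKerEquivRange_symm_apply_image] at h2
    simpa using h2
  have hzero : map f (G - g M) (D.comul x) = 0 := by
    have fac : (G - g M) = ext1 ∘ₗ D.redIter M := by
      ext y; exact (hfac y).symm
    have : map f (G - g M) = map f ext1 ∘ₗ map LinearMap.id (D.redIter M) := by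
      rw [← TensorProduct.map_comp, ← fac, LinearMap.comp_id]
    rw [this]
    simp only [LinearMap.coe_comp, Function.comp_apply]
    rw [id_redIter_zero hB hM, map_zero]
  have split : conv D f G x = conv D f (g M) x + conv D f (G - g M) x := by
    have : conv D f G = conv D f (g M) + conv D f (G - g M) := by
      rw [← conv_add_right]
      congr 1
      abel
    rw [this]; rfl
  rw [split]
  have e2 : conv D f (G - g M) x = 0 := by
    rw [conv_apply, hzero, map_zero]
  rw [e2, add_zero, conv_f_g M]
  simp only [LinearMap.sub_apply]
  rw [convPow_eq hB u hu M]
  simp only [LinearMap.coe_comp, Function.comp_apply]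
  rw [hM, map_zero, sub_zero]

theorem conv_inv_of_one (hB : D.IsBialgebra) (hc : D.IsConnected)
    (f : H →ₗ[K] A) (hf : f D.one = 1) :
    ∃ G : H →ₗ[K] A, conv D f G = eta D ∧ conv D G f = eta D ∧ G D.one = 1 := by
  obtain ⟨G, hG1, hG2⟩ := rinv hB hc f hf
  obtain ⟨G2, hH1, hH2⟩ := rinv hB hc G hG2
  have hfG2 : f = G2 := by
    calc f = conv D f (eta D) := (conv_eta_right hB f).symm
      _ = conv D f (conv D G G2) := by rw [hH1]
      _ = conv D (conv D f G) G2 := (conv_assoc hB f G G2).symm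
      _ = conv D (eta D) G2 := by rw [hG1]
      _ = G2 := conv_eta_left hB G2
  exact ⟨G, hG1, by rw [hfG2]; exact hH1, hG2⟩

theorem conv_inv_gen (hB : D.IsBialgebra) (hc : D.IsConnected)
    (f : H →ₗ[K] A) (c : A) (h1 : f D.one * c = 1) (h2 : c * f D.one = 1) :
    ∃ g : H →ₗ[K] A, conv D f g = eta D ∧ conv D g f = eta D := by
  have shift : ∀ (p q : H →ₗ[K] A) (a : A),
      conv D (LinearMap.mulRight K a ∘ₗ p) q = conv D p (LinearMap.mulLeft K a ∘ₗ q) := by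
    intro p q a
    ext x
    have e : LinearMap.mul' K A ∘ₗ map (LinearMap.mulRight K a ∘ₗ p) q
        = LinearMap.mul' K A ∘ₗ map p (LinearMap.mulLeft K a ∘ₗ q) := by
      apply TensorProduct.ext'
      intro m n
      simp [mul_assoc]
    exact congrArg (fun (F : H ⊗[K] H →ₗ[K] A) => F (D.comul x)) e
  obtain ⟨G0, k1, k2, k3⟩ := conv_inv_of_one hB hc (LinearMap.mulRight K c ∘ₗ f)
    (by simp [h1])
  obtain ⟨G1, m1, m2, m3⟩ := conv_inv_of_one hB hc (LinearMap.mulLeft K c ∘ₗ f)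
    (by simp [h2])
  set g := LinearMap.mulLeft K c ∘ₗ G0 with hgdef
  set h' := LinearMap.mulRight K c ∘ₗ G1 with hhdef
  have hg : conv D f g = eta D := by
    rw [hgdef, ← shift f G0 c]
    exact k1
  have hh : conv D h' f = eta D := by
    rw [hhdef, shift G1 f c]
    exact m2
  have hgh : h' = g := by
    calc h' = conv D h' (eta D) := (conv_eta_right hB h').symm
      _ = conv D h' (conv D f g) := by rw [hg]
      _ = conv D (conv D h' f) g := (conv_assoc hB h' f g).symm
      _ = conv D (eta D) g := by rw [hh]
      _ = g := conv_eta_left hB g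
  exact ⟨g, hg, hgh ▸ hh⟩

theorem comm_nat {M N P Q : Type*} [AddCommGroup M] [Module K M]
    [AddCommGroup N] [Module K N] [AddCommGroup P] [Module K P]
    [AddCommGroup Q] [Module K Q] (f : M →ₗ[K] P) (g : N →ₗ[K] Q) :
    map f g ∘ₗ (TensorProduct.comm K N M).toLinearMap
      = (TensorProduct.comm K Q P).toLinearMap ∘ₗ map g f := by
  apply TensorProduct.ext'
  intro a b
  simp

theorem perm3 :
    (TensorProduct.assoc K H H H).toLinearMap
        ∘ₗ (TensorProduct.comm K H (H ⊗[K] H)).toLinearMap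
        ∘ₗ map LinearMap.id (TensorProduct.comm K H H).toLinearMap
        ∘ₗ (TensorProduct.assoc K H H H).toLinearMap
      = (TensorProduct.comm K (H ⊗[K] H) H).toLinearMap
          ∘ₗ map (TensorProduct.comm K H H).toLinearMap LinearMap.id := by
  apply TensorProduct.ext_threefold
  intro a b c
  simp

theorem lift_comm {M : Type*} [AddCommGroup M] [Module K M]
    (F : H →ₗ[K] H →ₗ[K] M) (t : H ⊗[K] H) :
    lift F ((TensorProduct.comm K H H) t) = lift F.flip t := by
  have e : lift F ∘ₗ (TensorProduct.comm K H H).toLinearMap = lift F.flip := by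
    apply TensorProduct.ext'
    intro a b
    simp
  exact LinearMap.congr_fun e t

theorem comm_map₂ (m : H →ₗ[K] H →ₗ[K] H) (s t : H ⊗[K] H) :
    (TensorProduct.comm K H H) (map₂ m m t s)
      = map₂ m.flip m.flip ((TensorProduct.comm K H H) s) ((TensorProduct.comm K H H) t) := by
  induction t with
  | zero => simp
  | tmul a b =>
    induction s with
    | zero => simp
    | tmul p q => simp
    | add s1 s2 ih1 ih2 =>
      simp only [map_add, LinearMap.map_add, LinearMap.add_apply] at *
      rw [ih1, ih2]
  | add t1 t2 ih1 ih2 =>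
    simp only [map_add, LinearMap.add_apply, LinearMap.map_add] at *
    rw [ih1, ih2]

end S5

/-- If `(H, ·, 1, Δ, ε, ⊲)` is a left Post-Hopf algebra which is either
cocommutative or connected as a coalgebra, then `(H, ·ᵒᵖ, 1, Δᶜᵒᵖ, ε, ⊲ᵒᵖ)` is a right
Post-Hopf algebra, where `x ·ᵒᵖ y = y · x`, `Δᶜᵒᵖ = τ ∘ Δ` and `x ⊲ᵒᵖ y = y ⊲ x`. -/
theorem statement5 {K : Type*} [Field K] [CharZero K]
    {H : Type*} [AddCommGroup H] [Module K H]
    (D : BialgData K H) (l : H →ₗ[K] H →ₗ[K] H)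
    (hl : D.IsLeftPostHopf l)
    (h : D.IsCocomm ∨ D.IsConnected) :
    ((D.op).cop).IsRightPostHopf l.flip := by
  classical
  have hB := hl.isHopf.isBialgebra
  have hB' : ((D.op).cop).IsBialgebra := by
    refine ⟨?_, ?_, ?_, ?_, ?_, ?_, ?_, ?_, ?_, ?_⟩
    · intro x y z
      exact (hB.mul_assoc z y x).symm
    · intro x
      exact hB.mul_one x
    · intro x
      exact hB.one_mul x
    · intro x
      show (TensorProduct.assoc K H H H)
          ((map ((TensorProduct.comm K H H).toLinearMap ∘ₗ D.comul) LinearMap.id)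
            ((TensorProduct.comm K H H) (D.comul x)))
        = (map LinearMap.id ((TensorProduct.comm K H H).toLinearMap ∘ₗ D.comul))
            ((TensorProduct.comm K H H) (D.comul x))
      have n1 := S5.comm_nat (K := K)
        ((TensorProduct.comm K H H).toLinearMap ∘ₗ D.comul) (LinearMap.id : H →ₗ[K] H)
      have n2 := S5.comm_nat (K := K)
        (LinearMap.id : H →ₗ[K] H) ((TensorProduct.comm K H H).toLinearMap ∘ₗ D.comul)
      have e1 : (map ((TensorProduct.comm K H H).toLinearMap ∘ₗ D.comul) LinearMap.id)
            ((TensorProduct.comm K H H) (D.comul x))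
          = (TensorProduct.comm K H (H ⊗[K] H))
              (map LinearMap.id ((TensorProduct.comm K H H).toLinearMap ∘ₗ D.comul)
                (D.comul x)) := by
        have := LinearMap.congr_fun n1 (D.comul x)
        simpa using this
      have e2 : (map LinearMap.id ((TensorProduct.comm K H H).toLinearMap ∘ₗ D.comul))
            ((TensorProduct.comm K H H) (D.comul x))
          = (TensorProduct.comm K (H ⊗[K] H) H)
              (map ((TensorProduct.comm K H H).toLinearMap ∘ₗ D.comul) LinearMap.id
                (D.comul x)) := by
        have := LinearMap.congr_fun n2 (D.comul x)
        simpa using this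
      have e3 : map LinearMap.id ((TensorProduct.comm K H H).toLinearMap ∘ₗ D.comul)
            (D.comul x)
          = map LinearMap.id (TensorProduct.comm K H H).toLinearMap
              ((TensorProduct.assoc K H H H) (map D.comul LinearMap.id (D.comul x))) := by
        rw [hB.coassoc x]
        have : map (LinearMap.id : H →ₗ[K] H)
              ((TensorProduct.comm K H H).toLinearMap ∘ₗ D.comul)
            = map LinearMap.id (TensorProduct.comm K H H).toLinearMap
                ∘ₗ map LinearMap.id D.comul := by
          rw [← TensorProduct.map_comp, LinearMap.id_comp]
        exact LinearMap.congr_fun this (D.comul x)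
      have e4 : map ((TensorProduct.comm K H H).toLinearMap ∘ₗ D.comul) LinearMap.id
            (D.comul x)
          = map (TensorProduct.comm K H H).toLinearMap LinearMap.id
              (map D.comul LinearMap.id (D.comul x)) := by
        have : map ((TensorProduct.comm K H H).toLinearMap ∘ₗ D.comul)
              (LinearMap.id : H →ₗ[K] H)
            = map (TensorProduct.comm K H H).toLinearMap LinearMap.id
                ∘ₗ map D.comul LinearMap.id := by
          rw [← TensorProduct.map_comp, LinearMap.id_comp]
        exact LinearMap.congr_fun this (D.comul x)
      rw [e1, e2, e3, e4]
      have := LinearMap.congr_fun (S5.perm3 (K := K) (H := H))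
        (map D.comul LinearMap.id (D.comul x))
      simpa using this
    · intro x
      show (TensorProduct.lid K H)
          ((map D.counit LinearMap.id) ((TensorProduct.comm K H H) (D.comul x))) = x
      have n := S5.comm_nat (K := K) D.counit (LinearMap.id : H →ₗ[K] H)
      have e := LinearMap.congr_fun n (D.comul x)
      simp only [LinearMap.coe_comp, Function.comp_apply, LinearEquiv.coe_coe] at e
      rw [e]
      have lc : (TensorProduct.lid K H).toLinearMap
            ∘ₗ (TensorProduct.comm K H K).toLinearMap
          = (TensorProduct.rid K H).toLinearMap := by
        apply TensorProduct.ext'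
        intro a c
        simp [TensorProduct.smul_tmul]
      have := LinearMap.congr_fun lc (map LinearMap.id D.counit (D.comul x))
      simp only [LinearMap.coe_comp, Function.comp_apply, LinearEquiv.coe_coe] at this
      rw [this, hB.comul_counit x]
    · intro x
      show (TensorProduct.rid K H)
          ((map LinearMap.id D.counit) ((TensorProduct.comm K H H) (D.comul x))) = x
      have n := S5.comm_nat (K := K) (LinearMap.id : H →ₗ[K] H) D.counit
      have e := LinearMap.congr_fun n (D.comul x)
      simp only [LinearMap.coe_comp, Function.comp_apply, LinearEquiv.coe_coe] at e
      rw [e]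
      have rc : (TensorProduct.rid K H).toLinearMap
            ∘ₗ (TensorProduct.comm K K H).toLinearMap
          = (TensorProduct.lid K H).toLinearMap := by
        apply TensorProduct.ext'
        intro c a
        simp [TensorProduct.smul_tmul]
      have := LinearMap.congr_fun rc (map D.counit LinearMap.id (D.comul x))
      simp only [LinearMap.coe_comp, Function.comp_apply, LinearEquiv.coe_coe] at this
      rw [this, hB.counit_comul x]
    · intro x y
      show (TensorProduct.comm K H H) (D.comul (D.mul y x))
          = map₂ D.mul.flip D.mul.flip
              ((TensorProduct.comm K H H) (D.comul x)) ((TensorProduct.comm K H H) (D.comul y))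
      rw [hB.comul_mul y x]
      exact S5.comm_map₂ D.mul (D.comul x) (D.comul y)
    · intro x y
      exact (hB.counit_mul y x).trans (mul_comm _ _)
    · show (TensorProduct.comm K H H) (D.comul D.one) = D.one ⊗ₜ[K] D.one
      rw [hB.comul_one]
      simp
    · exact hB.counit_one
  refine ⟨⟨hB', ?_⟩, ?_, ?_, ?_, ?_, ?_⟩
  · -- antipode
    obtain ⟨S, hS1, hS2⟩ := hl.isHopf.antipode
    refine ⟨S, fun x => ?_, fun x => ?_⟩
    · show lift ((D.mul.flip).compl₁₂ S LinearMap.id)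
          ((TensorProduct.comm K H H) (D.comul x)) = D.counit x • D.one
      rw [S5.lift_comm]
      have : (D.mul.flip.compl₁₂ S LinearMap.id).flip
          = D.mul.compl₁₂ LinearMap.id S := by
        ext a b
        simp
      rw [this]
      exact hS2 x
    · show lift ((D.mul.flip).compl₁₂ LinearMap.id S)
          ((TensorProduct.comm K H H) (D.comul x)) = D.counit x • D.one
      rw [S5.lift_comm]
      have : (D.mul.flip.compl₁₂ LinearMap.id S).flip
          = D.mul.compl₁₂ S LinearMap.id := by
        ext a b
        simp
      rw [this]
      exact hS1 x
  · intro x y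
    exact (hl.counit_l y x).trans (mul_comm _ _)
  · intro x y
    show (TensorProduct.comm K H H) (D.comul (l y x))
        = map₂ l.flip l.flip
            ((TensorProduct.comm K H H) (D.comul x)) ((TensorProduct.comm K H H) (D.comul y))
    rw [hl.comul_l y x]
    exact S5.comm_map₂ l (D.comul x) (D.comul y)
  · intro x y z
    show l z (D.mul y x)
        = lift ((D.mul.flip).compl₁₂ (l.flip x) (l.flip y))
            ((TensorProduct.comm K H H) (D.comul z))
    rw [S5.lift_comm, hl.l_mul z y x]
    congr 1
  · intro x y z
    calc l.flip (l.flip x y) z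
        = l z (l y x) := rfl
      _ = lift ((D.mul.compl₁₂ LinearMap.id (l.flip y)).compr₂ (l.flip x)) (D.comul z) :=
          hl.l_l z y x
      _ = (l.flip x) (lift (D.mul.compl₁₂ LinearMap.id (l.flip y)) (D.comul z)) := by
          rw [TensorProduct.lift_compr₂]
          rfl
      _ = l.flip x (lift ((D.mul.flip).compl₁₂ (l.flip y) LinearMap.id)
            ((TensorProduct.comm K H H) (D.comul z))) := by
          rw [S5.lift_comm]
          congr 1
  · -- conv_inv
    rcases h with hcc | hconn
    · obtain ⟨β, hβ⟩ := hl.conv_inv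
      refine ⟨β, fun x => ⟨?_, ?_⟩⟩
      · show lift ((LinearMap.llcomp K H H H).compl₁₂ l.flip.flip β)
            ((TensorProduct.comm K H H) (D.comul x)) = D.counit x • LinearMap.id
        rw [LinearMap.flip_flip, hcc x]
        exact (hβ x).1
      · show lift ((LinearMap.llcomp K H H H).compl₁₂ β l.flip.flip)
            ((TensorProduct.comm K H H) (D.comul x)) = D.counit x • LinearMap.id
        rw [LinearMap.flip_flip, hcc x]
        exact (hβ x).2
    · obtain ⟨β, hβ⟩ := hl.conv_inv
      have hβ1 : (β D.one) ∘ₗ (l D.one) = LinearMap.id := by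
        have e := (hβ D.one).2
        rw [hB.comul_one] at e
        simp [hB.counit_one] at e
        exact e
      have hβ2 : (l D.one) ∘ₗ (β D.one) = LinearMap.id := by
        have e := (hβ D.one).1
        rw [hB.comul_one] at e
        simp [hB.counit_one] at e
        exact e
      set f : H →ₗ[K] (Module.End K H)ᵐᵒᵖ :=
        (MulOpposite.opLinearEquiv K (M := Module.End K H)).toLinearMap ∘ₗ l with hf
      have h1 : f D.one * MulOpposite.op (β D.one) = 1 := by
        show MulOpposite.op (l D.one) * MulOpposite.op (β D.one) = 1
        rw [← MulOpposite.op_mul]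
        rw [show (β D.one) * (l D.one) = (β D.one) ∘ₗ (l D.one) from rfl, hβ1]
        rfl
      have h2 : MulOpposite.op (β D.one) * f D.one = 1 := by
        show MulOpposite.op (β D.one) * MulOpposite.op (l D.one) = 1
        rw [← MulOpposite.op_mul]
        rw [show (l D.one) * (β D.one) = (l D.one) ∘ₗ (β D.one) from rfl, hβ2]
        rfl
      obtain ⟨g, hg1, hg2⟩ := S5.conv_inv_gen hB hconn f (MulOpposite.op (β D.one)) h1 h2
      set β' : H →ₗ[K] H →ₗ[K] H :=
        (MulOpposite.opLinearEquiv K (M := Module.End K H)).symm.toLinearMap ∘ₗ g with hβ'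
      have hgβ : ∀ a : H, g a = MulOpposite.op (β' a) := by
        intro a
        simp [hβ']
      refine ⟨β', fun x => ⟨?_, ?_⟩⟩
      · show lift ((LinearMap.llcomp K H H H).compl₁₂ l.flip.flip β')
            ((TensorProduct.comm K H H) (D.comul x)) = D.counit x • LinearMap.id
        rw [LinearMap.flip_flip]
        have e1 : LinearMap.mul' K (Module.End K H)ᵐᵒᵖ ∘ₗ map g f
            = (MulOpposite.opLinearEquiv K (M := Module.End K H)).toLinearMap
                ∘ₗ lift ((LinearMap.llcomp K H H H).compl₁₂ l β')
                ∘ₗ (TensorProduct.comm K H H).toLinearMap := by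
          apply TensorProduct.ext'
          intro a b
          simp only [LinearMap.coe_comp, Function.comp_apply, map_tmul,
            LinearMap.mul'_apply, LinearEquiv.coe_coe, TensorProduct.comm_tmul,
            TensorProduct.lift.tmul]
          rw [hgβ a, hf]
          rfl
        have e2 := LinearMap.congr_fun hg2 x
        have e3 := LinearMap.congr_fun e1 (D.comul x)
        simp only [LinearMap.coe_comp, Function.comp_apply, LinearEquiv.coe_coe] at e3
        apply (MulOpposite.opLinearEquiv K (M := Module.End K H)).injective
        rw [← e3]
        rw [show (LinearMap.mul' K (Module.End K H)ᵐᵒᵖ) ((map g f) (D.comul x))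
            = S5.conv D g f x from rfl, e2]
        simp [S5.eta_apply]
        rfl
      · show lift ((LinearMap.llcomp K H H H).compl₁₂ β' l.flip.flip)
            ((TensorProduct.comm K H H) (D.comul x)) = D.counit x • LinearMap.id
        rw [LinearMap.flip_flip]
        have e1 : LinearMap.mul' K (Module.End K H)ᵐᵒᵖ ∘ₗ map f g
            = (MulOpposite.opLinearEquiv K (M := Module.End K H)).toLinearMap
                ∘ₗ lift ((LinearMap.llcomp K H H H).compl₁₂ β' l)
                ∘ₗ (TensorProduct.comm K H H).toLinearMap := by
          apply TensorProduct.ext'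
          intro a b
          simp only [LinearMap.coe_comp, Function.comp_apply, map_tmul,
            LinearMap.mul'_apply, LinearEquiv.coe_coe, TensorProduct.comm_tmul,
            TensorProduct.lift.tmul]
          rw [hgβ b, hf]
          rfl
        have e2 := LinearMap.congr_fun hg1 x
        have e3 := LinearMap.congr_fun e1 (D.comul x)
        simp only [LinearMap.coe_comp, Function.comp_apply, LinearEquiv.coe_coe] at e3
        apply (MulOpposite.opLinearEquiv K (M := Module.End K H)).injective
        rw [← e3]
        rw [show (LinearMap.mul' K (Module.End K H)ᵐᵒᵖ) ((map f g) (D.comul x))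
            = S5.conv D f g x from rfl, e2]
        simp [S5.eta_apply]
        rfl
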